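/- arXiv:1905.11384 — 2 statements merged into one kernel-verified Lean document; each statement's English description precedes it below -/
import Mathlib

section
/- Let B = [b_{i₁,…,i_d}] ∈ ℝ₊^{m₁×⋯×m_d} (d ≥ 2, each m_j ≥ 2) be a nonnegative tensor with no zero slice, and let s_k ∈ ℝ^{m_k}, k ∈ [d], be positive vectors satisfying the compatibility condition. Let f̃ be the restriction of f̂ to U(s₁,…,s_d), with block gradients ∇_j f̃ ∈ L(s_j), and let f be the restriction of f̃ to V₀(s₁,…,s_d)^⊥, with gradient ∇f(x) ∈ V₀(s₁,…,s_d)^⊥. Let P₀ be the orthogonal projection of U(s₁,…,s_d) onto V₀(s₁,…,s_d)^⊥, W_j = P₀({(0,x_j) : x_j ∈ L(s_j)}), and let ∇_{W_j} f(x) denote the orthogonal projection of ∇f(x) onto W_j. Then for every x ∈ V₀(s₁,…,s_d)^⊥ and j ∈ [d]: ‖∇_j f̃(x)‖ ≤ ‖∇_{W_j} f(x)‖, and consequently ‖∇f(x)‖² ≤ ∑_{j=1}^d ‖∇_{W_j} f(x)‖². -/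
section

variable {d : ℕ} {m : Fin d → ℕ}

/-- The subspace `U(s₁,…,s_d) = {x : sₖᵀxₖ = 0 for all k}` of
`ℝ^{m₁} × ⋯ × ℝ^{m_d}`, realized inside `EuclideanSpace ℝ ((k : Fin d) × Fin (m k))`. -/
noncomputable def Usub (s : (k : Fin d) → Fin (m k) → ℝ) :
    Submodule ℝ (EuclideanSpace ℝ ((k : Fin d) × Fin (m k))) where
  carrier := {x | ∀ k : Fin d, ∑ i : Fin (m k), s k i * x ⟨k, i⟩ = 0}
  add_mem' := by
    intro a b ha hb k
    simp only [PiLp.add_apply, mul_add, Finset.sum_add_distrib, ha k, hb k, add_zero]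
  zero_mem' := by intro k; simp
  smul_mem' := by
    intro c a ha k
    have : ∀ i : Fin (m k), s k i * (c • a) ⟨k, i⟩ = c * (s k i * a ⟨k, i⟩) := by
      intro i; simp [PiLp.smul_apply, smul_eq_mul]; ring
    simp only [this, ← Finset.mul_sum, ha k, mul_zero]

/-- The subspace `V(s₁,…,s_d) = {x : x₁(i₁) + ⋯ + x_d(i_d) = 0 whenever B i > 0}`. -/
noncomputable def Vsub (B : ((j : Fin d) → Fin (m j)) → ℝ) :
    Submodule ℝ (EuclideanSpace ℝ ((k : Fin d) × Fin (m k))) where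
  carrier := {x | ∀ i : (j : Fin d) → Fin (m j), 0 < B i → ∑ k : Fin d, x ⟨k, i k⟩ = 0}
  add_mem' := by
    intro a b ha hb i hi
    simp only [PiLp.add_apply, Finset.sum_add_distrib, ha i hi, hb i hi, add_zero]
  zero_mem' := by intro i _; simp
  smul_mem' := by
    intro c a ha i hi
    have : ∀ k : Fin d, (c • a) ⟨k, i k⟩ = c * a ⟨k, i k⟩ := by
      intro k; simp [PiLp.smul_apply, smul_eq_mul]
    simp only [this, ← Finset.mul_sum, ha i hi, mul_zero]

/-- The orthogonal complement `V₀(s₁,…,s_d)^⊥` of `V₀ = V ∩ U` inside `U`. -/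
noncomputable def V0perp (B : ((j : Fin d) → Fin (m j)) → ℝ)
    (s : (k : Fin d) → Fin (m k) → ℝ) :
    Submodule ℝ (EuclideanSpace ℝ ((k : Fin d) × Fin (m k))) :=
  Usub s ⊓ (Vsub B ⊓ Usub s)ᗮ

/-- The copy of `L(s_j)` inside `U(s₁,…,s_d)`: vectors supported on the `j`-th block
whose `j`-th block lies in `L(s_j) = {x_j : s_jᵀx_j = 0}`. -/
noncomputable def Lblock (s : (k : Fin d) → Fin (m k) → ℝ) (j : Fin d) :
    Submodule ℝ (EuclideanSpace ℝ ((k : Fin d) × Fin (m k))) where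
  carrier := {x | (∑ i : Fin (m j), s j i * x ⟨j, i⟩ = 0) ∧
    ∀ p : (k : Fin d) × Fin (m k), p.1 ≠ j → x p = 0}
  add_mem' := by
    intro a b ha hb
    refine ⟨?_, ?_⟩
    · simp only [PiLp.add_apply, mul_add, Finset.sum_add_distrib, ha.1, hb.1, add_zero]
    · intro p hp; simp [PiLp.add_apply, ha.2 p hp, hb.2 p hp]
  zero_mem' := ⟨by simp, by intro p _; simp⟩
  smul_mem' := by
    intro c a ha
    refine ⟨?_, ?_⟩
    · have : ∀ i : Fin (m j), s j i * (c • a) ⟨j, i⟩ = c * (s j i * a ⟨j, i⟩) := by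
        intro i; simp [PiLp.smul_apply, smul_eq_mul]; ring
      simp only [this, ← Finset.mul_sum, ha.1, mul_zero]
    · intro p hp; simp [PiLp.smul_apply, ha.2 p hp]

/-- The orthogonal projection of the ambient space onto `V₀(s₁,…,s_d)^⊥`, as a linear
map into the ambient space. -/
noncomputable def P0 (B : ((j : Fin d) → Fin (m j)) → ℝ)
    (s : (k : Fin d) → Fin (m k) → ℝ) :
    EuclideanSpace ℝ ((k : Fin d) × Fin (m k)) →ₗ[ℝ]
      EuclideanSpace ℝ ((k : Fin d) × Fin (m k)) :=
  (V0perp B s).subtype ∘ₗ (Submodule.orthogonalProjectionOnto (V0perp B s)).toLinearMap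

/-- The subspace `W_j = P₀({(0, x_j) : x_j ∈ L(s_j)}) ⊆ V₀(s₁,…,s_d)^⊥`. -/
noncomputable def Wsub (B : ((j : Fin d) → Fin (m j)) → ℝ)
    (s : (k : Fin d) → Fin (m k) → ℝ) (j : Fin d) :
    Submodule ℝ (EuclideanSpace ℝ ((k : Fin d) × Fin (m k))) :=
  Submodule.map (P0 B s) (Lblock s j)

/-- The function `f̂(x) = ∑_i B i · exp(x₁(i₁) + ⋯ + x_d(i_d))`. -/
noncomputable def fhat (B : ((j : Fin d) → Fin (m j)) → ℝ)
    (y : EuclideanSpace ℝ ((k : Fin d) × Fin (m k))) : ℝ :=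
  ∑ i : (j : Fin d) → Fin (m j), B i * Real.exp (∑ k : Fin d, y ⟨k, i k⟩)

-- ======== auxiliary development ========
open scoped RealInnerProductSpace

namespace BlockGradAux

variable (B : ((j : Fin d) → Fin (m j)) → ℝ) (s : (k : Fin d) → Fin (m k) → ℝ)

local notation "E" => EuclideanSpace ℝ ((k : Fin d) × Fin (m k))

lemma orthoProj_inner_eq_zero {F : Type*} [NormedAddCommGroup F] [InnerProductSpace ℝ F]
    {K : Submodule ℝ F} [K.HasOrthogonalProjection] (v w : F) (hw : w ∈ K) :
    ⟪v - (K.orthogonalProjectionOnto v : F), w⟫ = 0 :=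
  Submodule.starProjection_inner_eq_zero v w hw

lemma orthoProj_eq_self_iff {F : Type*} [NormedAddCommGroup F] [InnerProductSpace ℝ F]
    {K : Submodule ℝ F} [K.HasOrthogonalProjection] {v : F} :
    (K.orthogonalProjectionOnto v : F) = v ↔ v ∈ K :=
  Submodule.starProjection_eq_self_iff

noncomputable def ell (i : (j : Fin d) → Fin (m j)) : E →L[ℝ] ℝ :=
  ∑ k : Fin d, EuclideanSpace.proj (⟨k, i k⟩ : (k : Fin d) × Fin (m k))

lemma ell_apply (i : (j : Fin d) → Fin (m j)) (y : E) :
    ell i y = ∑ k : Fin d, y ⟨k, i k⟩ := by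
  simp [ell]

lemma hasFDerivAt_fhat (x : E) :
    HasFDerivAt (fhat B)
      (∑ i : (j : Fin d) → Fin (m j), (B i * Real.exp (ell i x)) • ell i) x := by
  have hfn : fhat B = fun y : E => ∑ i : (j : Fin d) → Fin (m j),
      B i * Real.exp (ell i y) := by
    funext y; simp [fhat, ell_apply]
  rw [hfn]
  refine HasFDerivAt.fun_sum fun i _ => ?_
  have h := ((ell (m := m) i).hasFDerivAt (x := x)).exp.const_mul (B i)
  simpa [smul_smul] using h

lemma inner_gradient (x v : E) :
    ⟪gradient (fhat B) x, v⟫ =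
      ∑ i : (j : Fin d) → Fin (m j),
        B i * Real.exp (∑ k : Fin d, x ⟨k, i k⟩) * (∑ k : Fin d, v ⟨k, i k⟩) := by
  rw [gradient, InnerProductSpace.toDual_symm_apply, (hasFDerivAt_fhat B x).fderiv]
  simp [ell_apply, mul_assoc]

lemma gradient_perp (hB : ∀ i, 0 ≤ B i) (x : E) {v : E} (hv : v ∈ Vsub B) :
    ⟪gradient (fhat B) x, v⟫ = 0 := by
  rw [inner_gradient]
  refine Finset.sum_eq_zero fun i _ => ?_
  rcases eq_or_lt_of_le (hB i) with h | h
  · simp [← h]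
  · rw [hv i h, mul_zero]


lemma mem_Lblock {j : Fin d} {x : E} :
    x ∈ Lblock s j ↔ (∑ i : Fin (m j), s j i * x ⟨j, i⟩ = 0) ∧
      ∀ p : (k : Fin d) × Fin (m k), p.1 ≠ j → x p = 0 := Iff.rfl

lemma mem_Usub {x : E} :
    x ∈ Usub s ↔ ∀ k : Fin d, ∑ i : Fin (m k), s k i * x ⟨k, i⟩ = 0 := Iff.rfl

lemma Lblock_le_Usub (j : Fin d) : Lblock s j ≤ Usub s := by
  intro x hx k
  by_cases hk : k = j
  · subst hk; exact hx.1
  · exact Finset.sum_eq_zero fun i _ => by rw [hx.2 ⟨k, i⟩ hk, mul_zero]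

lemma inner_Lblock_eq_zero {j j' : Fin d} (h : j ≠ j') {a b : E}
    (ha : a ∈ Lblock s j) (hb : b ∈ Lblock s j') : ⟪a, b⟫ = 0 := by
  rw [PiLp.inner_apply]
  refine Finset.sum_eq_zero fun p _ => ?_
  by_cases hp : p.1 = j
  · rw [hb.2 p (hp ▸ h)]; simp
  · rw [ha.2 p hp]; simp

/-- the `j`-th block component of a vector. -/
noncomputable def bproj (j : Fin d) (x : E) : E :=
  WithLp.toLp 2 (fun p => if p.1 = j then x p else 0)

lemma bproj_mem {j : Fin d} {x : E} (hx : x ∈ Usub s) : bproj j x ∈ Lblock s j := by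
  refine ⟨?_, fun p hp => if_neg hp⟩
  have : ∀ i : Fin (m j), s j i * bproj j x ⟨j, i⟩ = s j i * x ⟨j, i⟩ := by
    intro i; simp [bproj]
  rw [Finset.sum_congr rfl fun i _ => this i]
  exact hx j

lemma sum_bproj (x : E) : ∑ j : Fin d, bproj j x = x := by
  ext p
  rw [WithLp.ofLp_sum, Finset.sum_apply p Finset.univ fun j => (bproj j x).ofLp]
  simp [bproj]


lemma key1 (g : E) (hg : ∀ v ∈ Vsub B, ⟪g, v⟫ = 0) (j : Fin d) :
    ‖Submodule.orthogonalProjectionOnto (Lblock s j) g‖ ≤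
      ‖Submodule.orthogonalProjectionOnto (Wsub B s j)
        ((Submodule.orthogonalProjectionOnto (V0perp B s) g : E))‖ := by
  set u : E := (Submodule.orthogonalProjectionOnto (Lblock s j) g : E) with hu_def
  have hu : u ∈ Lblock s j := SetLike.coe_mem _
  have hUeq : (Vsub B ⊓ Usub s) ⊔ ((Vsub B ⊓ Usub s)ᗮ ⊓ Usub s) = Usub s :=
    Submodule.sup_orthogonal_inf_of_hasOrthogonalProjection inf_le_right
  have huU : u ∈ (Vsub B ⊓ Usub s) ⊔ ((Vsub B ⊓ Usub s)ᗮ ⊓ Usub s) := by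
    rw [hUeq]; exact Lblock_le_Usub s j hu
  rcases Submodule.mem_sup.1 huU with ⟨u₁, hu₁, u₂, hu₂, huu⟩
  have hu₂' : u₂ ∈ V0perp B s := ⟨hu₂.2, hu₂.1⟩
  have hu₁perp : u₁ ∈ (V0perp B s)ᗮ := by
    rw [Submodule.mem_orthogonal]
    intro w hw
    rw [real_inner_comm]
    exact ((Vsub B ⊓ Usub s).mem_orthogonal w).1 hw.2 u₁ hu₁
  have hPu : (Submodule.orthogonalProjectionOnto (V0perp B s) u : E) = u₂ := by
    rw [← huu, map_add,
      Submodule.orthogonalProjectionOnto_apply_of_mem_orthogonal hu₁perp]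
    simp [orthoProj_eq_self_iff.2 hu₂']
  set Pg : E := (Submodule.orthogonalProjectionOnto (V0perp B s) g : E) with hPg_def
  set PWg : E := (Submodule.orthogonalProjectionOnto (Wsub B s j) Pg : E) with hPWg_def
  have hu₂W : u₂ ∈ Wsub B s j := ⟨u, hu, hPu⟩
  -- ‖u‖² = ⟪g, u⟫
  have e1 : ⟪g, u⟫ = ‖u‖ ^ 2 := by
    have h := orthoProj_inner_eq_zero g u hu
    rw [inner_sub_left, sub_eq_zero] at h
    rw [h, ← hu_def, real_inner_self_eq_norm_sq]
  have e2 : ⟪g, u⟫ = ⟪g, u₂⟫ := by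
    rw [← huu, inner_add_right, hg u₁ hu₁.1, zero_add]
  have e3 : ⟪g, u₂⟫ = ⟪Pg, u₂⟫ := by
    have h := orthoProj_inner_eq_zero g u₂ hu₂'
    rwa [inner_sub_left, sub_eq_zero] at h
  have e4 : ⟪Pg, u₂⟫ = ⟪PWg, u₂⟫ := by
    have h := orthoProj_inner_eq_zero Pg u₂ hu₂W
    rwa [inner_sub_left, sub_eq_zero] at h
  have e5 : ⟪PWg, u₂⟫ ≤ ‖PWg‖ * ‖u₂‖ := real_inner_le_norm _ _
  have e6 : ‖u₂‖ ≤ ‖u‖ := by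
    have horth : ⟪u₁, u₂⟫ = 0 :=
      ((Vsub B ⊓ Usub s).mem_orthogonal u₂).1 hu₂.1 u₁ hu₁
    have := norm_add_sq_real u₁ u₂
    rw [horth, huu] at this
    nlinarith [norm_nonneg u₁, norm_nonneg u₂, norm_nonneg u]
  have main : ‖u‖ ^ 2 ≤ ‖PWg‖ * ‖u‖ := by
    calc ‖u‖ ^ 2 = ⟪PWg, u₂⟫ := by rw [← e4, ← e3, ← e2, e1]
    _ ≤ ‖PWg‖ * ‖u₂‖ := e5
    _ ≤ ‖PWg‖ * ‖u‖ := by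
        exact mul_le_mul_of_nonneg_left e6 (norm_nonneg _)
  have : ‖u‖ ≤ ‖PWg‖ := by nlinarith [norm_nonneg u, norm_nonneg PWg]
  simpa [hu_def, hPWg_def] using this

lemma key2 (g : E) :
    ‖(Submodule.orthogonalProjectionOnto (V0perp B s) g : E)‖ ^ 2 ≤
      ∑ j : Fin d, ‖Submodule.orthogonalProjectionOnto (Lblock s j) g‖ ^ 2 := by
  set Pg : E := (Submodule.orthogonalProjectionOnto (V0perp B s) g : E) with hPg_def
  set a : Fin d → E := fun j => (Submodule.orthogonalProjectionOnto (Lblock s j) g : E) with ha_def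
  have haL : ∀ j, a j ∈ Lblock s j := fun j => SetLike.coe_mem _
  set q : E := ∑ j : Fin d, a j with hq_def
  have hPgU : Pg ∈ Usub s := (SetLike.coe_mem (Submodule.orthogonalProjectionOnto (V0perp B s) g)).1
  have hPgsum : Pg = ∑ j : Fin d, bproj j Pg := (sum_bproj Pg).symm
  have hgq : ⟪g, Pg⟫ = ⟪q, Pg⟫ := by
    conv_lhs => rw [hPgsum]
    conv_rhs => rw [hPgsum]
    rw [inner_sum, inner_sum]
    refine Finset.sum_congr rfl fun j _ => ?_
    have hb : bproj j Pg ∈ Lblock s j := bproj_mem s hPgU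
    have h1 : ⟪g, bproj j Pg⟫ = ⟪a j, bproj j Pg⟫ := by
      have h := orthoProj_inner_eq_zero g (bproj j Pg) hb
      rwa [inner_sub_left, sub_eq_zero] at h
    have h2 : ⟪q, bproj j Pg⟫ = ⟪a j, bproj j Pg⟫ := by
      rw [hq_def, sum_inner]
      rw [Finset.sum_eq_single j]
      · intro j' _ hj'
        exact inner_Lblock_eq_zero s hj' (haL j') hb
      · intro h; exact absurd (Finset.mem_univ j) h
    rw [h1, h2]
  have hq2 : ‖q‖ ^ 2 = ∑ j : Fin d, ‖a j‖ ^ 2 := by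
    rw [← real_inner_self_eq_norm_sq, hq_def, sum_inner]
    refine Finset.sum_congr rfl fun j _ => ?_
    rw [inner_sum, Finset.sum_eq_single j]
    · exact real_inner_self_eq_norm_sq _
    · intro j' _ hj'
      exact inner_Lblock_eq_zero s (Ne.symm hj') (haL j) (haL j')
    · intro h; exact absurd (Finset.mem_univ j) h
  have e1 : ‖Pg‖ ^ 2 = ⟪g, Pg⟫ := by
    have h := orthoProj_inner_eq_zero g Pg (SetLike.coe_mem _)
    rw [inner_sub_left, sub_eq_zero] at h
    rw [h, real_inner_self_eq_norm_sq]
  have e2 : ‖Pg‖ ^ 2 ≤ ‖q‖ * ‖Pg‖ := by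
    rw [e1, hgq]; exact real_inner_le_norm _ _
  have e3 : ‖Pg‖ ≤ ‖q‖ := by nlinarith [norm_nonneg Pg, norm_nonneg q]
  calc ‖Pg‖ ^ 2 ≤ ‖q‖ ^ 2 := by nlinarith [norm_nonneg Pg, norm_nonneg q]
  _ = ∑ j : Fin d, ‖a j‖ ^ 2 := hq2
  _ = ∑ j : Fin d, ‖Submodule.orthogonalProjectionOnto (Lblock s j) g‖ ^ 2 := by
      refine Finset.sum_congr rfl fun j _ => ?_
      rw [ha_def]; norm_num


end BlockGradAux

/-- Lemma 4.1 (3) of the paper. For every `x ∈ V₀(s₁,…,s_d)^⊥` and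
`j ∈ [d]`, `‖∇_j f̃(x)‖ ≤ ‖∇_{W_j} f(x)‖`, and consequently
`‖∇f(x)‖² ≤ ∑_{j=1}^d ‖∇_{W_j} f(x)‖²`.  Here `∇_j f̃(x)` is the orthogonal projection
of the gradient of `f̂` at `x` onto the block subspace `{(0,x_j) : x_j ∈ L(s_j)}`,
`∇f(x)` its orthogonal projection onto `V₀^⊥`, and `∇_{W_j} f(x)` the orthogonal
projection of `∇f(x)` onto `W_j`. -/
theorem block_gradient_bounds {d : ℕ} {m : Fin d → ℕ} (hd : 2 ≤ d)
    (hm : ∀ j, 2 ≤ m j)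
    (B : ((j : Fin d) → Fin (m j)) → ℝ)
    (hB : ∀ i, 0 ≤ B i)
    (hslice : ∀ (k : Fin d) (ik : Fin (m k)),
      ∃ i : (j : Fin d) → Fin (m j), i k = ik ∧ B i ≠ 0)
    (s : (k : Fin d) → Fin (m k) → ℝ) (hs : ∀ k i, 0 < s k i)
    (hcompat : ∀ k l : Fin d, ∑ i, s k i = ∑ i, s l i) :
    ∀ x ∈ V0perp B s,
      (∀ j : Fin d,
        ‖Submodule.orthogonalProjectionOnto (Lblock s j) (gradient (fhat B) x)‖ ≤
          ‖Submodule.orthogonalProjectionOnto (Wsub B s j)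
            ((Submodule.orthogonalProjectionOnto (V0perp B s) (gradient (fhat B) x) :
              EuclideanSpace ℝ ((k : Fin d) × Fin (m k))))‖) ∧
      ‖(Submodule.orthogonalProjectionOnto (V0perp B s) (gradient (fhat B) x) :
            EuclideanSpace ℝ ((k : Fin d) × Fin (m k)))‖ ^ 2 ≤
        ∑ j : Fin d,
          ‖Submodule.orthogonalProjectionOnto (Wsub B s j)
            ((Submodule.orthogonalProjectionOnto (V0perp B s) (gradient (fhat B) x) :
              EuclideanSpace ℝ ((k : Fin d) × Fin (m k))))‖ ^ 2 := by
  intro x _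
  set g : EuclideanSpace ℝ ((k : Fin d) × Fin (m k)) := gradient (fhat B) x with hg_def
  have hg : ∀ v ∈ Vsub B, ⟪g, v⟫ = 0 := fun v hv => BlockGradAux.gradient_perp B hB x hv
  have h1 := fun j => BlockGradAux.key1 B s g hg j
  refine ⟨h1, ?_⟩
  calc ‖(Submodule.orthogonalProjectionOnto (V0perp B s) g :
        EuclideanSpace ℝ ((k : Fin d) × Fin (m k)))‖ ^ 2
      ≤ ∑ j : Fin d, ‖Submodule.orthogonalProjectionOnto (Lblock s j) g‖ ^ 2 :=
        BlockGradAux.key2 B s g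
    _ ≤ ∑ j : Fin d,
          ‖Submodule.orthogonalProjectionOnto (Wsub B s j)
            ((Submodule.orthogonalProjectionOnto (V0perp B s) g :
              EuclideanSpace ℝ ((k : Fin d) × Fin (m k))))‖ ^ 2 :=
        Finset.sum_le_sum fun j _ => pow_le_pow_left₀ (norm_nonneg _) (h1 j) 2


end
end

section
/- Let A ∈ ℝ₊^{m×n} be a nonnegative matrix with no zero row and no zero column, and let b ∈ ℝ^m and a, c ∈ ℝⁿ be positive vectors satisfying cᵀa = 1_mᵀb. Then there exists a scaling B of A (i.e., B = D₁AD₂ for some diagonal matrices D₁ ∈ ℝ^{m×m}, D₂ ∈ ℝ^{n×n} with positive diagonal entries) satisfying Ba = b and Bᵀ1_m = c, if and only if there exists a nonnegative matrix C ∈ ℝ₊^{m×n} with the same zero pattern as A (c_{ij} = 0 ⟺ a_{ij} = 0) satisfying Ca = b and Cᵀ1_m = c. Moreover, if such a scaling B exists, it is unique. -/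
open Filter Real

section SchrodingerBridgeAux
variable {m n : ℕ}
variable {m n : ℕ}

private lemma sinkhorn_linpart (A : Matrix (Fin m) (Fin n) ℝ)
    (a : Fin n → ℝ) (b : Fin m → ℝ) (c : Fin n → ℝ)
    (C : Matrix (Fin m) (Fin n) ℝ)
    (hCr : ∀ i, ∑ j, C i j * a j = b i) (hCc : ∀ j, ∑ i, C i j = c j)
    (x : (Fin m → ℝ) × (Fin n → ℝ)) :
    (∑ i, b i * x.1 i) + (∑ j, c j * a j * x.2 j)
      = ∑ i, ∑ j, C i j * a j * (x.1 i + x.2 j) := by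
  have h1 : ∑ i, b i * x.1 i = ∑ i, ∑ j, C i j * a j * x.1 i := by
    refine Finset.sum_congr rfl fun i _ => ?_
    rw [← hCr i, Finset.sum_mul]
  have h2 : ∑ j, c j * a j * x.2 j = ∑ i, ∑ j, C i j * a j * x.2 j := by
    rw [Finset.sum_comm]
    refine Finset.sum_congr rfl fun j _ => ?_
    rw [← hCc j, Finset.sum_mul, Finset.sum_mul]
  rw [h1, h2, ← Finset.sum_add_distrib]
  refine Finset.sum_congr rfl fun i _ => ?_
  rw [← Finset.sum_add_distrib]
  exact Finset.sum_congr rfl fun j _ => by ring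


private lemma tendsto_cexp_sub_linear (c1 d s : ℝ) (hc1 : 0 < c1) (hd : 0 < d) :
    Filter.Tendsto (fun t : ℝ => c1 * Real.exp (t * d) - s * t) Filter.atTop Filter.atTop := by
  have h1 : Tendsto (fun t : ℝ => Real.exp (t * d) / (t * d)) atTop atTop := by
    have := (Real.tendsto_exp_div_pow_atTop 1).comp
      (Tendsto.atTop_mul_const hd tendsto_id)
    simpa [Function.comp_def] using this
  have h2 : Tendsto (fun t : ℝ => (c1 * d * (Real.exp (t * d) / (t * d)) + -s) * t) atTop atTop :=
    Tendsto.atTop_mul_atTop₀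
      (Filter.tendsto_atTop_add_const_right _ (-s)
        (Tendsto.const_mul_atTop (by positivity) h1))
      tendsto_id
  refine h2.congr' ?_
  filter_upwards [eventually_gt_atTop 0] with t ht
  have h3 : t * d ≠ 0 := by positivity
  field_simp
  ring

private lemma exists_min_on_submodule {E : Type*} [NormedAddCommGroup E] [NormedSpace ℝ E]
    [FiniteDimensional ℝ E] (K : Submodule ℝ E) (g : E → ℝ) (hg : Continuous g)
    (hconv : ∀ (x : E) (l : ℝ), 0 ≤ l → l ≤ 1 → g (l • x) ≤ (1 - l) * g 0 + l * g x)
    (hray : ∀ x ∈ K, x ≠ 0 → Tendsto (fun t : ℝ => g (t • x)) atTop atTop) :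
    ∃ p ∈ K, ∀ q ∈ K, g p ≤ g q := by
  set S : Set E := {x | x ∈ (K : Set E) ∧ g x ≤ g 0} with hS
  have hKclosed : IsClosed (K : Set E) := Submodule.closed_of_finiteDimensional K
  have hSclosed : IsClosed S := hKclosed.inter (isClosed_le hg continuous_const)
  have hSbounded : Bornology.IsBounded S := by
    by_contra hB
    rw [isBounded_iff_forall_norm_le] at hB
    push_neg at hB
    have hseq : ∀ k : ℕ, ∃ x ∈ S, (k : ℝ) < ‖x‖ := fun k => hB k
    choose x hxS hxnorm using hseq
    have hxpos : ∀ k, 0 < ‖x k‖ := fun k => lt_of_le_of_lt (Nat.cast_nonneg k) (hxnorm k)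
    set u : ℕ → E := fun k => ‖x k‖⁻¹ • x k with hu
    have huK : ∀ k, u k ∈ Metric.sphere (0:E) 1 ∩ (K : Set E) := by
      intro k
      refine ⟨?_, K.smul_mem _ (hxS k).1⟩
      rw [mem_sphere_zero_iff_norm, norm_smul, norm_inv, norm_norm,
        inv_mul_cancel₀ (hxpos k).ne']
    have hcpt : IsCompact (Metric.sphere (0:E) 1 ∩ (K : Set E)) :=
      (isCompact_sphere 0 1).inter_right hKclosed
    obtain ⟨d, hd, φ, hφ, hdlim⟩ := hcpt.tendsto_subseq huK
    have hdK : d ∈ K := hd.2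
    have hdne : d ≠ 0 := by
      intro h
      have := hd.1
      rw [h, mem_sphere_zero_iff_norm, norm_zero] at this
      norm_num at this
    have hclaim : ∀ t : ℝ, 0 ≤ t → g (t • d) ≤ g 0 := by
      intro t ht
      have hlim : Tendsto (fun k => g (t • u (φ k))) atTop (nhds (g (t • d))) :=
        (hg.tendsto _).comp ((tendsto_const_nhds.smul hdlim))
      refine le_of_tendsto hlim ?_
      filter_upwards [eventually_ge_atTop ⌈t⌉₊] with k hk
      have h1 : t ≤ ‖x (φ k)‖ := by
        calc t ≤ (⌈t⌉₊ : ℝ) := Nat.le_ceil t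
        _ ≤ (k : ℝ) := by exact_mod_cast hk
        _ ≤ (φ k : ℝ) := by exact_mod_cast hφ.le_apply
        _ ≤ ‖x (φ k)‖ := (hxnorm (φ k)).le
      set l := t / ‖x (φ k)‖ with hl
      have hl0 : 0 ≤ l := div_nonneg ht (hxpos (φ k)).le
      have hl1 : l ≤ 1 := (div_le_one (hxpos (φ k))).mpr h1
      have heq : t • u (φ k) = l • x (φ k) := by
        rw [hu, smul_smul, hl, div_eq_mul_inv]
      show g (t • u (φ k)) ≤ g 0
      rw [heq]
      have := hconv (x (φ k)) l hl0 hl1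
      have hgx := (hxS (φ k)).2
      nlinarith
    obtain ⟨t, hgt, ht0⟩ :=
      (((hray d hdK hdne).eventually_gt_atTop (g 0)).and (eventually_ge_atTop 0)).exists
    exact absurd (hclaim t ht0) (not_le.mpr hgt)
  have hScpt : IsCompact S := Metric.isCompact_of_isClosed_isBounded hSclosed hSbounded
  have hSne : S.Nonempty := ⟨0, K.zero_mem, le_refl _⟩
  obtain ⟨p, hpS, hpmin⟩ := hScpt.exists_isMinOn hSne hg.continuousOn
  refine ⟨p, hpS.1, fun q hq => ?_⟩
  rcases le_or_gt (g q) (g 0) with h | h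
  · exact hpmin ⟨hq, h⟩
  · exact le_trans (hpmin ⟨K.zero_mem, le_refl _⟩) h.le

-- scratch: definitions for existence proof
private lemma sinkhorn_exists (A : Matrix (Fin m) (Fin n) ℝ) (hA : ∀ i j, 0 ≤ A i j)
    (a : Fin n → ℝ) (b : Fin m → ℝ) (c : Fin n → ℝ) (ha : ∀ j, 0 < a j)
    (C : Matrix (Fin m) (Fin n) ℝ) (hC0 : ∀ i j, 0 ≤ C i j)
    (hCz : ∀ i j, C i j = 0 ↔ A i j = 0)
    (hCr : ∀ i, ∑ j, C i j * a j = b i) (hCc : ∀ j, ∑ i, C i j = c j) :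
    ∃ u : Fin m → ℝ, ∃ v : Fin n → ℝ,
      (∀ i, ∑ j, Real.exp (u i + v j) * A i j * a j = b i) ∧
      (∀ j, ∑ i, Real.exp (u i + v j) * A i j = c j) := by
  set g : ((Fin m → ℝ) × (Fin n → ℝ)) → ℝ := fun x =>
    (∑ i, ∑ j, A i j * a j * Real.exp (x.1 i + x.2 j))
      - ((∑ i, b i * x.1 i) + (∑ j, c j * a j * x.2 j)) with hg
  have hgcont : Continuous g := by
    rw [hg]; fun_prop
  -- submodule L
  set L : Submodule ℝ ((Fin m → ℝ) × (Fin n → ℝ)) :=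
    { carrier := {x | ∀ i j, A i j ≠ 0 → x.1 i + x.2 j = 0}
      add_mem' := by
        intro x y hx hy i j hij
        have h1 := hx i j hij; have h2 := hy i j hij
        simp only [Prod.fst_add, Prod.snd_add, Pi.add_apply]
        linarith
      zero_mem' := by intro i j _; simp
      smul_mem' := by
        intro r x hx i j hij
        simp only [Prod.smul_fst, Prod.smul_snd, Pi.smul_apply, smul_eq_mul]
        rw [← mul_add, hx i j hij, mul_zero] } with hL
  have hmemL : ∀ x, x ∈ L ↔ ∀ i j, A i j ≠ 0 → x.1 i + x.2 j = 0 := fun x => Iff.rfl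
  -- invariance of g under L
  have hinv : ∀ (x l : (Fin m → ℝ) × (Fin n → ℝ)), l ∈ L → g (x + l) = g x := by
    intro x l hl
    rw [hg]
    simp only
    congr 1
    · refine Finset.sum_congr rfl fun i _ => Finset.sum_congr rfl fun j _ => ?_
      by_cases hij : A i j = 0
      · simp [hij]
      · have h0 := (hmemL l).mp hl i j hij
        simp only [Prod.fst_add, Prod.snd_add, Pi.add_apply]
        have : x.1 i + l.1 i + (x.2 j + l.2 j) = x.1 i + x.2 j := by linarith
        rw [this]
    · rw [sinkhorn_linpart A a b c C hCr hCc (x + l),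
        sinkhorn_linpart A a b c C hCr hCc x]
      refine Finset.sum_congr rfl fun i _ => Finset.sum_congr rfl fun j _ => ?_
      by_cases hij : A i j = 0
      · have : C i j = 0 := (hCz i j).mpr hij
        simp [this]
      · have h0 := (hmemL l).mp hl i j hij
        simp only [Prod.fst_add, Prod.snd_add, Pi.add_apply]
        have : x.1 i + l.1 i + (x.2 j + l.2 j) = x.1 i + x.2 j := by linarith
        rw [this]
  -- convexity inequality
  have hconv : ∀ (x : (Fin m → ℝ) × (Fin n → ℝ)) (t : ℝ), 0 ≤ t → t ≤ 1 →
      g (t • x) ≤ (1 - t) * g 0 + t * g x := by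
    intro x t ht0 ht1
    rw [hg]
    simp only [Prod.fst_zero, Prod.snd_zero, Pi.zero_apply, add_zero, mul_zero,
      Real.exp_zero, mul_one, Finset.sum_const_zero, Prod.smul_fst, Prod.smul_snd,
      Pi.smul_apply, smul_eq_mul]
    have hexp : ∀ i j, A i j * a j * Real.exp (t * x.1 i + t * x.2 j)
        ≤ A i j * a j * (t * Real.exp (x.1 i + x.2 j) + (1 - t)) := by
      intro i j
      have hkey : Real.exp (t * (x.1 i + x.2 j) + (1 - t) * 0)
          ≤ t * Real.exp (x.1 i + x.2 j) + (1 - t) * Real.exp 0 :=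
        convexOn_exp.2 (Set.mem_univ _) (Set.mem_univ (0:ℝ)) ht0 (by linarith) (by ring)
      rw [Real.exp_zero] at hkey
      have h1 : t * x.1 i + t * x.2 j = t * (x.1 i + x.2 j) + (1 - t) * 0 := by ring
      rw [h1]
      have h2 : 0 ≤ A i j * a j := mul_nonneg (hA i j) (ha j).le
      nlinarith
    have hsum : ∑ i, ∑ j, A i j * a j * Real.exp (t * x.1 i + t * x.2 j)
        ≤ ∑ i, ∑ j, A i j * a j * (t * Real.exp (x.1 i + x.2 j) + (1 - t)) :=
      Finset.sum_le_sum fun i _ => Finset.sum_le_sum fun j _ => hexp i j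
    have hexpand : ∑ i, ∑ j, A i j * a j * (t * Real.exp (x.1 i + x.2 j) + (1 - t))
        = t * (∑ i, ∑ j, A i j * a j * Real.exp (x.1 i + x.2 j))
          + (1 - t) * (∑ i, ∑ j, A i j * a j) := by
      rw [Finset.mul_sum, Finset.mul_sum, ← Finset.sum_add_distrib]
      refine Finset.sum_congr rfl fun i _ => ?_
      rw [Finset.mul_sum, Finset.mul_sum, ← Finset.sum_add_distrib]
      exact Finset.sum_congr rfl fun j _ => by ring
    have hlin1 : ∑ i, b i * (t * x.1 i) = t * ∑ i, b i * x.1 i := by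
      rw [Finset.mul_sum]; exact Finset.sum_congr rfl fun i _ => by ring
    have hlin2 : ∑ j, c j * a j * (t * x.2 j) = t * ∑ j, c j * a j * x.2 j := by
      rw [Finset.mul_sum]; exact Finset.sum_congr rfl fun j _ => by ring
    rw [hlin1, hlin2]
    nlinarith [hsum, hexpand]
  -- ray coercivity
  have hray : ∀ x : (Fin m → ℝ) × (Fin n → ℝ), x ∉ L →
      Tendsto (fun t : ℝ => g (t • x)) atTop atTop := by
    intro x hxL
    have hx : ∃ i j, A i j ≠ 0 ∧ x.1 i + x.2 j ≠ 0 := by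
      rw [hmemL] at hxL; push_neg at hxL; exact hxL
    set s : ℝ := (∑ i, b i * x.1 i) + (∑ j, c j * a j * x.2 j) with hs
    have hgt : ∀ t : ℝ, g (t • x)
        = (∑ i, ∑ j, A i j * a j * Real.exp (t * (x.1 i + x.2 j))) - t * s := by
      intro t
      rw [hg]
      simp only [Prod.smul_fst, Prod.smul_snd, Pi.smul_apply, smul_eq_mul]
      congr 1
      · refine Finset.sum_congr rfl fun i _ => Finset.sum_congr rfl fun j _ => ?_
        rw [mul_add]
      · rw [hs, mul_add, Finset.mul_sum, Finset.mul_sum]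
        congr 1
        · exact Finset.sum_congr rfl fun i _ => by ring
        · exact Finset.sum_congr rfl fun j _ => by ring
    have hexpnn : ∀ t : ℝ, ∀ i j,
        (0:ℝ) ≤ A i j * a j * Real.exp (t * (x.1 i + x.2 j)) := fun t i j =>
      mul_nonneg (mul_nonneg (hA i j) (ha j).le) (Real.exp_nonneg _)
    by_cases hpos : ∃ i j, A i j ≠ 0 ∧ 0 < x.1 i + x.2 j
    · obtain ⟨i0, j0, hA0, hd⟩ := hpos
      have hc1 : 0 < A i0 j0 * a j0 :=
        mul_pos (lt_of_le_of_ne (hA i0 j0) (Ne.symm hA0)) (ha j0)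
      refine tendsto_atTop_mono ?_
        (tendsto_cexp_sub_linear (A i0 j0 * a j0) (x.1 i0 + x.2 j0) s hc1 hd)
      intro t
      rw [hgt t]
      have h1 : A i0 j0 * a j0 * Real.exp (t * (x.1 i0 + x.2 j0))
          ≤ ∑ i, ∑ j, A i j * a j * Real.exp (t * (x.1 i + x.2 j)) := by
        refine le_trans ?_ (Finset.single_le_sum
          (f := fun i => ∑ j, A i j * a j * Real.exp (t * (x.1 i + x.2 j)))
          (fun i _ => Finset.sum_nonneg fun j _ => hexpnn t i j) (Finset.mem_univ i0))
        exact Finset.single_le_sum (fun j _ => hexpnn t i0 j) (Finset.mem_univ j0)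
      linarith
    · push_neg at hpos
      obtain ⟨i0, j0, hA0, hne⟩ := hx
      have hd : x.1 i0 + x.2 j0 < 0 := lt_of_le_of_ne (hpos i0 j0 hA0) hne
      have hsneg : s < 0 := by
        rw [hs, sinkhorn_linpart A a b c C hCr hCc x, ← Finset.sum_product']
        have h1 : ∑ p ∈ Finset.univ ×ˢ Finset.univ,
            C p.1 p.2 * a p.2 * (x.1 p.1 + x.2 p.2)
            < ∑ p ∈ (Finset.univ ×ˢ Finset.univ :
                Finset (Fin m × Fin n)), (0:ℝ) := by
          refine Finset.sum_lt_sum ?_ ⟨(i0, j0), Finset.mem_univ _, ?_⟩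
          · rintro ⟨i, j⟩ _
            by_cases hij : A i j = 0
            · simp [(hCz i j).mpr hij]
            · exact mul_nonpos_of_nonneg_of_nonpos
                (mul_nonneg (hC0 i j) (ha j).le) (hpos i j hij)
          · have hCpos : 0 < C i0 j0 :=
              lt_of_le_of_ne (hC0 i0 j0) (Ne.symm fun h => hA0 ((hCz i0 j0).mp h))
            exact mul_neg_of_pos_of_neg (mul_pos hCpos (ha j0)) hd
        simpa using h1
      refine tendsto_atTop_mono ?_ (tendsto_id.atTop_mul_const (neg_pos.mpr hsneg))
      intro t
      rw [hgt t]
      have h1 : (0:ℝ) ≤ ∑ i, ∑ j, A i j * a j * Real.exp (t * (x.1 i + x.2 j)) :=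
        Finset.sum_nonneg fun i _ => Finset.sum_nonneg fun j _ => hexpnn t i j
      simp only [id]
      nlinarith
  -- minimizer
  obtain ⟨K, hK⟩ := Submodule.exists_isCompl L
  have hrayK : ∀ x ∈ K, x ≠ 0 → Tendsto (fun t : ℝ => g (t • x)) atTop atTop :=
    fun x hxK hxne =>
      hray x (fun hxL => hxne (Submodule.disjoint_def.mp hK.disjoint x hxL hxK))
  obtain ⟨p, hpK, hpmin⟩ := exists_min_on_submodule K g hgcont hconv hrayK
  have hglobal : ∀ y, g p ≤ g y := by
    intro y
    have hy : y ∈ L ⊔ K := by rw [hK.sup_eq_top]; trivial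
    obtain ⟨l, hl, k, hk, hlk⟩ := Submodule.mem_sup.mp hy
    calc g p ≤ g k := hpmin k hk
    _ = g (k + l) := (hinv k l hl).symm
    _ = g y := by rw [add_comm, hlk]
  -- row equations
  have hrowEq : ∀ i0, ∑ j, A i0 j * a j * Real.exp (p.1 i0 + p.2 j) = b i0 := by
    intro i0
    set dlt : Fin m → ℝ := fun i => if i = i0 then 1 else 0 with hdlt
    set e : (Fin m → ℝ) × (Fin n → ℝ) := (Pi.single i0 1, 0) with he
    set φ : ℝ → ℝ := fun t =>
      (∑ i, ∑ j, A i j * a j * Real.exp (p.1 i + t * dlt i + p.2 j))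
        - ((∑ i, b i * (p.1 i + t * dlt i)) + (∑ j, c j * a j * p.2 j)) with hφ
    have hφg : ∀ t, φ t = g (p + t • e) := by
      intro t
      rw [hφ, hg]
      simp only [he, Prod.fst_add, Prod.snd_add, Prod.smul_fst, Prod.smul_snd,
        Pi.add_apply, Pi.smul_apply, smul_eq_mul, smul_zero, Pi.zero_apply, add_zero,
        Pi.single_apply, hdlt]
    have hmin0 : IsLocalMin φ 0 := by
      refine Filter.Eventually.of_forall fun t => ?_
      rw [hφg t, hφg 0]
      simpa using hglobal (p + t • e)
    have hD : HasDerivAt φ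
        ((∑ i, ∑ j, A i j * a j * (Real.exp (p.1 i + 0 * dlt i + p.2 j) * dlt i))
          - ((∑ i, b i * dlt i) + 0)) 0 := by
      rw [hφ]
      refine HasDerivAt.sub ?_ (HasDerivAt.add ?_ (hasDerivAt_const 0 _))
      · refine HasDerivAt.fun_sum fun i _ => HasDerivAt.fun_sum fun j _ => ?_
        exact ((((hasDerivAt_mul_const (dlt i)).const_add
          (p.1 i)).add_const (p.2 j)).exp).const_mul (A i j * a j)
      · refine HasDerivAt.fun_sum fun i _ => ?_
        exact ((hasDerivAt_mul_const (dlt i)).const_add (p.1 i)).const_mul (b i)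
    have hzero := hmin0.hasDerivAt_eq_zero hD
    simp only [zero_mul, add_zero, hdlt, mul_ite, mul_one, mul_zero, ite_self,
      Finset.sum_ite_irrel, Finset.sum_const_zero,
      Finset.sum_ite_eq', Finset.mem_univ, if_true] at hzero
    linarith
  -- column equations
  have hcolEq : ∀ j0, ∑ i, A i j0 * a j0 * Real.exp (p.1 i + p.2 j0) = c j0 * a j0 := by
    intro j0
    set dlt : Fin n → ℝ := fun j => if j = j0 then 1 else 0 with hdlt
    set e : (Fin m → ℝ) × (Fin n → ℝ) := (0, Pi.single j0 1) with he
    set φ : ℝ → ℝ := fun t =>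
      (∑ i, ∑ j, A i j * a j * Real.exp (p.1 i + (p.2 j + t * dlt j)))
        - ((∑ i, b i * p.1 i) + (∑ j, c j * a j * (p.2 j + t * dlt j))) with hφ
    have hφg : ∀ t, φ t = g (p + t • e) := by
      intro t
      rw [hφ, hg]
      simp only [he, Prod.fst_add, Prod.snd_add, Prod.smul_fst, Prod.smul_snd,
        Pi.add_apply, Pi.smul_apply, smul_eq_mul, smul_zero, Pi.zero_apply, add_zero,
        Pi.single_apply, hdlt]
    have hmin0 : IsLocalMin φ 0 := by
      refine Filter.Eventually.of_forall fun t => ?_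
      rw [hφg t, hφg 0]
      simpa using hglobal (p + t • e)
    have hD : HasDerivAt φ
        ((∑ i, ∑ j, A i j * a j * (Real.exp (p.1 i + (p.2 j + 0 * dlt j)) * dlt j))
          - (0 + (∑ j, c j * a j * dlt j))) 0 := by
      rw [hφ]
      refine HasDerivAt.sub ?_ (HasDerivAt.add (hasDerivAt_const 0 _) ?_)
      · refine HasDerivAt.fun_sum fun i _ => HasDerivAt.fun_sum fun j _ => ?_
        exact ((((hasDerivAt_mul_const (dlt j)).const_add
          (p.2 j)).const_add (p.1 i)).exp).const_mul (A i j * a j)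
      · refine HasDerivAt.fun_sum fun j _ => ?_
        exact ((hasDerivAt_mul_const (dlt j)).const_add (p.2 j)).const_mul (c j * a j)
    have hzero := hmin0.hasDerivAt_eq_zero hD
    simp only [zero_mul, add_zero, zero_add, hdlt, mul_ite, mul_one, mul_zero, ite_self,
      Finset.sum_ite_irrel, Finset.sum_const_zero,
      Finset.sum_ite_eq', Finset.mem_univ, if_true] at hzero
    linarith
  refine ⟨p.1, p.2, fun i => ?_, fun j => ?_⟩
  · rw [← hrowEq i]
    exact Finset.sum_congr rfl fun j _ => by ring
  · have h1 := hcolEq j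
    have h2 : ∑ i, A i j * a j * Real.exp (p.1 i + p.2 j)
        = (∑ i, Real.exp (p.1 i + p.2 j) * A i j) * a j := by
      rw [Finset.sum_mul]; exact Finset.sum_congr rfl fun i _ => by ring
    rw [h2] at h1
    exact mul_right_cancel₀ (ha j).ne' h1

variable {m n : ℕ}

private lemma exp_mul_nonneg' (t : ℝ) : 0 ≤ (Real.exp t - 1) * t := by
  rcases le_or_gt 0 t with h | h
  · nlinarith [Real.one_le_exp h]
  · nlinarith [Real.exp_lt_one_iff.mpr h]

private lemma exp_mul_eq_zero' {t : ℝ} (h : (Real.exp t - 1) * t = 0) : t = 0 := by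
  by_contra ht
  rcases lt_or_gt_of_ne ht with h1 | h1
  · nlinarith [Real.exp_lt_one_iff.mpr h1]
  · nlinarith [Real.one_lt_exp_iff.mpr h1]

private lemma sinkhorn_linpart' (A : Matrix (Fin m) (Fin n) ℝ)
    (a : Fin n → ℝ) (b : Fin m → ℝ) (c : Fin n → ℝ)
    (C : Matrix (Fin m) (Fin n) ℝ)
    (hCr : ∀ i, ∑ j, C i j * a j = b i) (hCc : ∀ j, ∑ i, C i j = c j)
    (x : (Fin m → ℝ) × (Fin n → ℝ)) :
    (∑ i, b i * x.1 i) + (∑ j, c j * a j * x.2 j)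
      = ∑ i, ∑ j, C i j * a j * (x.1 i + x.2 j) := by
  have h1 : ∑ i, b i * x.1 i = ∑ i, ∑ j, C i j * a j * x.1 i := by
    refine Finset.sum_congr rfl fun i _ => ?_
    rw [← hCr i, Finset.sum_mul]
  have h2 : ∑ j, c j * a j * x.2 j = ∑ i, ∑ j, C i j * a j * x.2 j := by
    rw [Finset.sum_comm]
    refine Finset.sum_congr rfl fun j _ => ?_
    rw [← hCc j, Finset.sum_mul, Finset.sum_mul]
  rw [h1, h2, ← Finset.sum_add_distrib]
  refine Finset.sum_congr rfl fun i _ => ?_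
  rw [← Finset.sum_add_distrib]
  exact Finset.sum_congr rfl fun j _ => by ring

private lemma sinkhorn_unique (A : Matrix (Fin m) (Fin n) ℝ) (hA : ∀ i j, 0 ≤ A i j)
    (a : Fin n → ℝ) (b : Fin m → ℝ) (c : Fin n → ℝ) (ha : ∀ j, 0 < a j)
    (B B' : Matrix (Fin m) (Fin n) ℝ)
    (u : Fin m → ℝ) (v : Fin n → ℝ)
    (hB : ∀ i j, B i j = Real.exp (u i + v j) * A i j)
    (hBr : ∀ i, ∑ j, B i j * a j = b i) (hBc : ∀ j, ∑ i, B i j = c j)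
    (u' : Fin m → ℝ) (v' : Fin n → ℝ)
    (hB' : ∀ i j, B' i j = Real.exp (u' i + v' j) * A i j)
    (hB'r : ∀ i, ∑ j, B' i j * a j = b i) (hB'c : ∀ j, ∑ i, B' i j = c j) :
    B = B' := by
  set w : Fin m → ℝ := fun i => u' i - u i with hw
  set z : Fin n → ℝ := fun j => v' j - v j with hz
  have key : ∀ i j, B' i j = B i j * Real.exp (w i + z j) := by
    intro i j
    rw [hB i j, hB' i j, hw, hz]
    have h1 : u' i + v' j = (u i + v j) + ((u' i - u i) + (v' j - v j)) := by ring
    rw [h1, Real.exp_add]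
    ring
  have e1 := sinkhorn_linpart' A a b c B' hB'r hB'c (w, z)
  have e2 := sinkhorn_linpart' A a b c B hBr hBc (w, z)
  have hzero : ∑ i, ∑ j, (B' i j - B i j) * a j * (w i + z j) = 0 := by
    have h3 : ∀ i, ∑ j, (B' i j - B i j) * a j * (w i + z j)
        = (∑ j, B' i j * a j * (w i + z j)) - ∑ j, B i j * a j * (w i + z j) := by
      intro i
      rw [← Finset.sum_sub_distrib]
      exact Finset.sum_congr rfl fun j _ => by ring
    calc ∑ i, ∑ j, (B' i j - B i j) * a j * (w i + z j)
        = (∑ i, ∑ j, B' i j * a j * (w i + z j))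
          - ∑ i, ∑ j, B i j * a j * (w i + z j) := by
          rw [← Finset.sum_sub_distrib]
          exact Finset.sum_congr rfl fun i _ => h3 i
    _ = 0 := by rw [← e1, ← e2]; ring
  rw [← Finset.sum_product'] at hzero
  have hterm : ∀ q : Fin m × Fin n,
      (B' q.1 q.2 - B q.1 q.2) * a q.2 * (w q.1 + z q.2)
        = (Real.exp (u q.1 + v q.2) * A q.1 q.2 * a q.2)
          * ((Real.exp (w q.1 + z q.2) - 1) * (w q.1 + z q.2)) := by
    rintro ⟨i, j⟩
    rw [key i j, hB i j]
    ring
  have hnn : ∀ q ∈ (Finset.univ ×ˢ Finset.univ : Finset (Fin m × Fin n)),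
      (0:ℝ) ≤ (B' q.1 q.2 - B q.1 q.2) * a q.2 * (w q.1 + z q.2) := by
    intro q _
    rw [hterm q]
    exact mul_nonneg (mul_nonneg (mul_nonneg (Real.exp_nonneg _) (hA _ _)) (ha _).le)
      (exp_mul_nonneg' _)
  have hall := (Finset.sum_eq_zero_iff_of_nonneg hnn).mp hzero
  ext i j
  by_cases hij : A i j = 0
  · rw [hB i j, hB' i j, hij, mul_zero, mul_zero]
  · have h4 := hall (i, j) (Finset.mem_univ _)
    rw [hterm (i, j)] at h4
    have h5 : 0 < Real.exp (u i + v j) * A i j * a j :=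
      mul_pos (mul_pos (Real.exp_pos _) (lt_of_le_of_ne (hA i j) (Ne.symm hij))) (ha j)
    have h6 : (Real.exp (w i + z j) - 1) * (w i + z j) = 0 := by
      rcases mul_eq_zero.mp h4 with h | h
      · exact absurd h h5.ne'
      · exact h
    have h7 : w i + z j = 0 := exp_mul_eq_zero' h6
    rw [key i j, h7, Real.exp_zero, mul_one]

end SchrodingerBridgeAux

/-- Theorem 5.2 of the paper, generalized discrete Schrödinger bridge.
Let `A ∈ ℝ₊^{m×n}` have no zero row and no zero column, and let `b > 0`, `a, c > 0` with
`cᵀa = 1ᵀb`. Then a positive diagonal scaling `B = D₁AD₂` (i.e. `B i j = e^{uᵢ+vⱼ} A i j`)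
with `B a = b` and `Bᵀ1 = c` exists iff there is a nonnegative `C` with the same zero
pattern as `A` satisfying `C a = b` and `Cᵀ1 = c`; moreover such a scaling `B` is
unique. -/
theorem generalized_schrodinger_bridge {m n : ℕ}
    (A : Matrix (Fin m) (Fin n) ℝ)
    (hA : ∀ i j, 0 ≤ A i j)
    (hrow : ∀ i, ∃ j, A i j ≠ 0)
    (hcol : ∀ j, ∃ i, A i j ≠ 0)
    (b : Fin m → ℝ) (a c : Fin n → ℝ)
    (hb : ∀ i, 0 < b i) (ha : ∀ j, 0 < a j) (hc : ∀ j, 0 < c j)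
    (hsum : ∑ j, c j * a j = ∑ i, b i) :
    ((∃ B : Matrix (Fin m) (Fin n) ℝ,
        (∃ u : Fin m → ℝ, ∃ v : Fin n → ℝ, ∀ i j, B i j = Real.exp (u i + v j) * A i j) ∧
        (∀ i, ∑ j, B i j * a j = b i) ∧ (∀ j, ∑ i, B i j = c j)) ↔
      (∃ C : Matrix (Fin m) (Fin n) ℝ, (∀ i j, 0 ≤ C i j) ∧
        (∀ i j, C i j = 0 ↔ A i j = 0) ∧
        (∀ i, ∑ j, C i j * a j = b i) ∧ (∀ j, ∑ i, C i j = c j))) ∧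
    (∀ B B' : Matrix (Fin m) (Fin n) ℝ,
      (∃ u : Fin m → ℝ, ∃ v : Fin n → ℝ, ∀ i j, B i j = Real.exp (u i + v j) * A i j) →
      (∀ i, ∑ j, B i j * a j = b i) → (∀ j, ∑ i, B i j = c j) →
      (∃ u : Fin m → ℝ, ∃ v : Fin n → ℝ, ∀ i j, B' i j = Real.exp (u i + v j) * A i j) →
      (∀ i, ∑ j, B' i j * a j = b i) → (∀ j, ∑ i, B' i j = c j) →
      B = B') := by
  constructor
  · constructor
    · rintro ⟨B, ⟨u, v, huv⟩, hBr, hBc⟩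
      refine ⟨B, fun i j => ?_, fun i j => ?_, hBr, hBc⟩
      · rw [huv i j]; exact mul_nonneg (Real.exp_nonneg _) (hA i j)
      · rw [huv i j]
        constructor
        · intro h
          rcases mul_eq_zero.mp h with h | h
          · exact absurd h (Real.exp_ne_zero _)
          · exact h
        · intro h; rw [h, mul_zero]
    · rintro ⟨C, hC0, hCz, hCr, hCc⟩
      obtain ⟨u, v, hrowE, hcolE⟩ := sinkhorn_exists A hA a b c ha C hC0 hCz hCr hCc
      exact ⟨fun i j => Real.exp (u i + v j) * A i j, ⟨u, v, fun i j => rfl⟩,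
        hrowE, hcolE⟩
  · rintro B B' ⟨u, v, hB⟩ hBr hBc ⟨u', v', hB'⟩ hB'r hB'c
    exact sinkhorn_unique A hA a b c ha B B' u v hB hBr hBc u' v' hB' hB'r hB'c
end
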